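/- Let k ∈ ℕ, n ≥ 0 an integer, and I ∈ 𝒫(2^{-n}). For any δ ∈ ℕ⁻¹ with δ < 2^{-n}, 2^n δ ∈ ℕ⁻¹, and any family (f_J)_{J∈𝒫(I,δ)} of Schwartz functions on ℝ^k with supp(f̂_J) ⊆ 𝒰_J for all J, setting f_I = Σ_{J∈𝒫(I,δ)} f_J, one has ‖f_I‖_{L^{p_k}(ℝ^k)} ≤ 𝒟_k(2^n δ)·(Σ_{J∈𝒫(I,δ)} ‖f_J‖²_{L^{p_k}(ℝ^k)})^{1/2}. -/

import Mathlib

open MeasureTheory Real FourierTransform Finset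
open scoped RealInnerProductSpace

noncomputable section

/-- Euclidean space `ℝ^k`. -/
abbrev Ek (k : ℕ) := EuclideanSpace ℝ (Fin k)

/-- The moment curve `Γ_k(t) = (t, t², …, t^k)`. -/
def momentCurve (k : ℕ) (t : ℝ) : Ek k := WithLp.toLp 2 (fun j => t ^ ((j : ℕ) + 1))

/-- The `i`-th derivative `Γ_k^{(i)}(t)` of the moment curve. -/
def momentDeriv (k i : ℕ) (t : ℝ) : Ek k := WithLp.toLp 2 (fun j =>
  if i ≤ (j : ℕ) + 1 then (((j : ℕ) + 1).descFactorial i : ℝ) * t ^ ((j : ℕ) + 1 - i) else 0)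

/-- The parallelepiped `C ⬝ 𝒰_J` for the interval `J = [a,b]`: centered at `Γ_k(c_J)`, with
`i`-th side of length `4|J|^i` in direction `Γ_k^{(i)}(c_J)`, dilated by factor `C` about
its center. -/
def UBox (k : ℕ) (C a b : ℝ) : Set (Ek k) :=
  {x | ∃ u : Fin k → ℝ, (∀ i : Fin k, abs (u i) ≤ C * (2 * (b - a) ^ ((i : ℕ) + 1))) ∧
    x = momentCurve k ((a + b) / 2) +
      ∑ i : Fin k, u i • momentDeriv k ((i : ℕ) + 1) ((a + b) / 2)}

/-- The dual parallelepiped `𝒰_J^o`. -/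
def UBoxDual (k : ℕ) (a b : ℝ) : Set (Ek k) :=
  {x | ∀ i : Fin k,
    abs (inner ℝ x (momentDeriv k ((i : ℕ) + 1) ((a + b) / 2)) : ℝ) ≤ ((b - a) ^ ((i : ℕ) + 1))⁻¹ / 4}

/-- The `L¹`-normalized bump function `φ_J` adapted to `𝒰_J^o`, `J = [a,b]`. -/
def phiBump (k : ℕ) (a b : ℝ) (x : Ek k) : ℝ :=
  ((volume (UBoxDual k a b)).toReal)⁻¹ *
    sInf {t : ℝ | 1 ≤ t ∧ t⁻¹ • x ∈ UBoxDual k a b} ^ (-(10 * (k : ℝ)))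

/-- `L^p`-norm (with real exponent) of a function on `ℝ^k`. -/
def LpN {k : ℕ} (p : ℝ) (f : Ek k → ℂ) : ℝ := (∫ x, ‖f x‖ ^ p) ^ p⁻¹

/-- Convolution of two real-valued functions on `ℝ^k`. -/
def cnv {k : ℕ} (f g : Ek k → ℝ) (x : Ek k) : ℝ := ∫ y, f y * g (x - y)

/-- The critical decoupling exponent `p_k = k(k+1)`. -/
def pk (k : ℕ) : ℝ := k * (k + 1)

/-- The `ℓ²L^{p_k}` decoupling inequality for the moment curve `Γ_k` at scale `δ = 1/n`
with constant `C`. -/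
def DecIneq (k n : ℕ) (C : ℝ) : Prop :=
  ∀ f : ℕ → SchwartzMap (Ek k) ℂ,
    (∀ j < n, Function.support (𝓕 ⇑(f j)) ⊆ UBox k 1 ((j : ℝ) / n) (((j : ℝ) + 1) / n)) →
    LpN (pk k) (fun x => ∑ j ∈ Finset.range n, f j x) ≤
      C * (∑ j ∈ Finset.range n, LpN (pk k) (f j) ^ 2) ^ ((1 : ℝ) / 2)

/-- The decoupling constant `𝒟_k(δ)`, `δ = 1/n`: the smallest constant, monotone
nonincreasing in `δ`, for which the decoupling inequality holds. -/
def DecConst (k n : ℕ) : ℝ :=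
  sInf {C : ℝ | 0 ≤ C ∧ ∀ m : ℕ, 0 < m → m ≤ n → DecIneq k m C}

/-- The bilinear decoupling inequality for `Γ_k` at scale `δ = 1/n` with constant `C`. -/
def BilinIneq (k n : ℕ) (C : ℝ) : Prop :=
  ∀ (α β : ℝ) (m₁ m₂ : ℕ), 0 < m₁ → 0 < m₂ →
    0 ≤ α → α + (m₁ : ℝ) / n ≤ 1 → 0 ≤ β → β + (m₂ : ℝ) / n ≤ 1 →
    (∀ x ∈ Set.Icc α (α + (m₁ : ℝ) / n), ∀ y ∈ Set.Icc β (β + (m₂ : ℝ) / n),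
      (4 : ℝ)⁻¹ ≤ |x - y|) →
    ∀ f g : ℕ → SchwartzMap (Ek k) ℂ,
    (∀ j < m₁, Function.support (𝓕 ⇑(f j)) ⊆ UBox k 1 (α + j / n) (α + (j + 1) / n)) →
    (∀ j < m₂, Function.support (𝓕 ⇑(g j)) ⊆ UBox k 1 (β + j / n) (β + (j + 1) / n)) →
    (∫ x, ‖∑ j ∈ Finset.range m₁, f j x‖ ^ (pk k / 2) *
        ‖∑ j ∈ Finset.range m₂, g j x‖ ^ (pk k / 2)) ^ (pk k)⁻¹ ≤
      C * (∑ j ∈ Finset.range m₁, LpN (pk k) (f j) ^ 2) ^ ((1 : ℝ) / 4) *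
        (∑ j ∈ Finset.range m₂, LpN (pk k) (g j) ^ 2) ^ ((1 : ℝ) / 4)

/-- The bilinear decoupling constant `ℬ_k(δ)`, `δ = 1/n`, monotone nonincreasing in `δ`. -/
def BilinConst (k n : ℕ) : ℝ :=
  sInf {C : ℝ | 0 ≤ C ∧ ∀ m : ℕ, 0 < m → m ≤ n → BilinIneq k m C}

/-- Partial sum `Σ_{m ∈ [s,t)} f_m` of a family of Schwartz functions,
corresponding to `f_L = Σ_{K ∈ 𝒫(L,δ)} f_K`. -/
def fSum (f : ℕ → SchwartzMap (Ek 3) ℂ) (s t : ℕ) (x : Ek 3) : ℂ :=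
  ∑ m ∈ Finset.Ico s t, f m x

/-- The asymmetric bilinear inequality on `ℝ³` with exponents `(e₁, e₂)` on the left and
`(r₁, r₂)` on the right, at scale `δ = 1/n`, with first interval of length `1/na` and
second interval of length `1/nb`, with constant `C`. -/
def MIneq (e₁ e₂ r₁ r₂ : ℝ) (n na nb : ℕ) (C : ℝ) : Prop :=
  ∀ α β : ℝ, 0 ≤ α → α + (na : ℝ)⁻¹ ≤ 1 → 0 ≤ β → β + (nb : ℝ)⁻¹ ≤ 1 →
    (∀ x ∈ Set.Icc α (α + (na : ℝ)⁻¹), ∀ y ∈ Set.Icc β (β + (nb : ℝ)⁻¹),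
      (4 : ℝ)⁻¹ ≤ |x - y|) →
    ∀ f g : ℕ → SchwartzMap (Ek 3) ℂ,
    (∀ j < n / na, Function.support (𝓕 ⇑(f j)) ⊆
      UBox 3 1 (α + (j : ℝ) / n) (α + ((j : ℝ) + 1) / n)) →
    (∀ j < n / nb, Function.support (𝓕 ⇑(g j)) ⊆
      UBox 3 1 (β + (j : ℝ) / n) (β + ((j : ℝ) + 1) / n)) →
    ∫ x, cnv (fun y => ‖∑ j ∈ Finset.range (n / na), f j y‖ ^ e₁)
        (phiBump 3 α (α + (na : ℝ)⁻¹)) x *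
      cnv (fun y => ‖∑ j ∈ Finset.range (n / nb), g j y‖ ^ e₂)
        (phiBump 3 β (β + (nb : ℝ)⁻¹)) x ≤
      C ^ (12 : ℕ) * (∑ j ∈ Finset.range (n / na), LpN 12 (f j) ^ 2) ^ r₁ *
        (∑ j ∈ Finset.range (n / nb), LpN 12 (g j) ^ 2) ^ r₂

/-- `M_{6,a,b}(δ)` where `δ = 1/n`, `δ^a = 1/na`, `δ^b = 1/nb`. -/
def M6 (n na nb : ℕ) : ℝ := sInf {C : ℝ | 0 ≤ C ∧ MIneq 6 6 3 3 n na nb C}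

/-- `M_{2,a,b}(δ)` where `δ = 1/n`, `δ^a = 1/na`, `δ^b = 1/nb`. -/
def M2 (n na nb : ℕ) : ℝ := sInf {C : ℝ | 0 ≤ C ∧ MIneq 2 10 1 5 n na nb C}

end

noncomputable section

namespace Stmt3Aux

variable {k : ℕ}

lemma momentDeriv_zero (t : ℝ) : momentDeriv k 0 t = momentCurve k t := by
  ext j
  simp [momentDeriv, momentCurve]

lemma momentDeriv_hasDerivAt (i : ℕ) (l : Fin k) (t : ℝ) :
    HasDerivAt (fun t => momentDeriv k i t l) (momentDeriv k (i + 1) t l) t := by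
  by_cases h1 : i + 1 ≤ (l : ℕ) + 1
  · have h0 : i ≤ (l : ℕ) + 1 := le_trans (Nat.le_succ i) h1
    have hi : i ≤ (l : ℕ) := Nat.lt_succ_iff.mp h1
    have he : (l : ℕ) + 1 - i = ((l : ℕ) - i) + 1 := by omega
    simp only [momentDeriv, PiLp.toLp_apply, if_pos h0, if_pos h1, he]
    have := (hasDerivAt_pow ((l : ℕ) - i + 1) t).const_mul
      ((((l : ℕ) + 1).descFactorial i : ℝ))
    refine this.congr_deriv ?_
    have hd : ((l : ℕ) + 1).descFactorial (i + 1)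
        = ((l : ℕ) + 1 - i) * ((l : ℕ) + 1).descFactorial i := Nat.descFactorial_succ _ _
    have he2 : (l : ℕ) + 1 - (i + 1) = (l : ℕ) - i := by omega
    rw [hd, he2]
    push_cast [he]
    ring
  · by_cases h0 : i ≤ (l : ℕ) + 1
    · -- i = l + 1, constant function
      have hi : i = (l : ℕ) + 1 := by omega
      have he : (l : ℕ) + 1 - i = 0 := by omega
      simp only [momentDeriv, PiLp.toLp_apply, if_pos h0, if_neg h1, he, pow_zero, mul_one]
      exact hasDerivAt_const t _
    · have h1' : ¬ (i + 1 ≤ (l : ℕ) + 1) := by omega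
      simp only [momentDeriv, PiLp.toLp_apply, if_neg h0, if_neg h1']
      exact hasDerivAt_const t 0

/-- the rescaling matrix entries -/
def Mm (k : ℕ) (s lam : ℝ) (j l : Fin k) : ℝ :=
  if (l : ℕ) ≤ (j : ℕ) then
    (((j : ℕ) + 1).choose ((l : ℕ) + 1) : ℝ) * s ^ ((j : ℕ) - (l : ℕ)) * lam ^ ((l : ℕ) + 1)
  else 0

/-- the rescaling linear map -/
def Araw (k : ℕ) (s lam : ℝ) : Ek k →ₗ[ℝ] Ek k where
  toFun x := (WithLp.toLp 2 (fun j => ∑ l, Mm k s lam j l * x l) : Ek k)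
  map_add' x y := by
    ext j
    simp only [PiLp.add_apply, PiLp.toLp_apply]
    rw [← Finset.sum_add_distrib]
    exact Finset.sum_congr rfl fun l _ => by ring
  map_smul' c x := by
    ext j
    simp only [PiLp.toLp_apply, PiLp.smul_apply, RingHom.id_apply, smul_eq_mul, Finset.mul_sum]
    exact Finset.sum_congr rfl fun l _ => by ring

lemma Araw_apply (s lam : ℝ) (x : Ek k) (j : Fin k) :
    Araw k s lam x j = ∑ l, Mm k s lam j l * x l := rfl

/-- base case: action on the moment curve -/
lemma Araw_momentCurve (s lam t : ℝ) :
    Araw k s lam (momentCurve k t) = momentCurve k (s + lam * t) - momentCurve k s := by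
  ext j
  rw [PiLp.sub_apply, Araw_apply]
  have hcoe : ∀ l : Fin k, Mm k s lam j l * momentCurve k t l
      = (fun l : ℕ => if l ≤ (j : ℕ) then
          (((j : ℕ) + 1).choose (l + 1) : ℝ) * s ^ ((j : ℕ) - l) * lam ^ (l + 1) * t ^ (l + 1)
          else 0) (l : ℕ) := by
    intro l
    simp only [Mm, momentCurve, PiLp.toLp_apply]
    split_ifs with h <;> simp
  have h1 : ∑ l : Fin k, Mm k s lam j l * momentCurve k t l
      = ∑ l ∈ Finset.range k, (fun l : ℕ => if l ≤ (j : ℕ) then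
          (((j : ℕ) + 1).choose (l + 1) : ℝ) * s ^ ((j : ℕ) - l) * lam ^ (l + 1) * t ^ (l + 1)
          else 0) l :=
    (Finset.sum_congr rfl fun l _ => hcoe l).trans
      (Fin.sum_univ_eq_sum_range (fun l : ℕ => if l ≤ (j : ℕ) then
          (((j : ℕ) + 1).choose (l + 1) : ℝ) * s ^ ((j : ℕ) - l) * lam ^ (l + 1) * t ^ (l + 1)
          else 0) k)
  rw [h1]
  have hsub : Finset.range ((j : ℕ) + 1) ⊆ Finset.range k := by
    intro l hl
    simp only [Finset.mem_range] at *
    omega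
  rw [← Finset.sum_subset hsub (by
    intro l _ hl
    simp only [Finset.mem_range] at hl
    rw [if_neg (by omega)])]
  have hbin : (s + lam * t) ^ ((j : ℕ) + 1)
      = ∑ q ∈ Finset.range ((j : ℕ) + 1 + 1), (lam * t) ^ q * s ^ ((j : ℕ) + 1 - q) *
          (((j : ℕ) + 1).choose q : ℝ) := by
    rw [add_comm s (lam * t)]
    exact add_pow (lam * t) s ((j : ℕ) + 1)
  rw [Finset.sum_range_succ'] at hbin
  simp only [pow_zero, one_mul, Nat.choose_zero_right, Nat.cast_one, mul_one, Nat.sub_zero] at hbin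
  have : ∑ l ∈ Finset.range ((j : ℕ) + 1), (if l ≤ (j : ℕ) then
      (((j : ℕ) + 1).choose (l + 1) : ℝ) * s ^ ((j : ℕ) - l) * lam ^ (l + 1) * t ^ (l + 1)
      else 0)
      = ∑ l ∈ Finset.range ((j : ℕ) + 1),
        (lam * t) ^ (l + 1) * s ^ ((j : ℕ) + 1 - (l + 1)) * (((j : ℕ) + 1).choose (l + 1) : ℝ) := by
    refine Finset.sum_congr rfl fun l hl => ?_
    simp only [Finset.mem_range] at hl
    rw [if_pos (by omega)]
    have : (j : ℕ) + 1 - (l + 1) = (j : ℕ) - l := by omega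
    rw [this, mul_pow]
    ring
  rw [this]
  simp only [momentCurve, PiLp.toLp_apply]
  linarith [hbin]

/-- inductive identity for derivatives -/
lemma Araw_momentDeriv (s lam : ℝ) : ∀ (i : ℕ) (t : ℝ),
    Araw k s lam (momentDeriv k i t)
      = lam ^ i • momentDeriv k i (s + lam * t)
        - (if i = 0 then momentCurve k s else 0) := by
  have key : ∀ (i : ℕ) (j : Fin k),
      (fun t => Araw k s lam (momentDeriv k i t) j)
        = (fun t => lam ^ i * momentDeriv k i (s + lam * t) j
            - (if i = 0 then momentCurve k s j else 0)) := by
    intro i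
    induction i with
    | zero =>
      intro j
      funext t
      have := PiLp.ext_iff.mp (Araw_momentCurve (k := k) s lam t) j
      simp only [momentDeriv_zero, if_pos rfl, pow_zero, one_mul]
      rw [show (momentCurve k (s + lam * t) - momentCurve k s) j
        = momentCurve k (s + lam * t) j - momentCurve k s j from rfl] at this
      simpa [momentDeriv_zero] using this
    | succ i ih =>
      intro j
      funext t
      -- differentiate both sides of ih j
      have hL : HasDerivAt (fun t => Araw k s lam (momentDeriv k i t) j)
          (Araw k s lam (momentDeriv k (i + 1) t) j) t := by
        simp only [Araw_apply]
        exact HasDerivAt.fun_sum fun l _ => (momentDeriv_hasDerivAt i l t).const_mul _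
      have hu : HasDerivAt (fun t : ℝ => s + lam * t) lam t := by
        simpa using ((hasDerivAt_id t).const_mul lam).const_add s
      have hg : HasDerivAt (fun y => momentDeriv k i y j)
          (momentDeriv k (i + 1) (s + lam * t) j) (s + lam * t) :=
        momentDeriv_hasDerivAt i j (s + lam * t)
      have hR : HasDerivAt
          (fun t => lam ^ i * momentDeriv k i (s + lam * t) j
            - (if i = 0 then momentCurve k s j else 0))
          (lam ^ i * (momentDeriv k (i + 1) (s + lam * t) j * lam)) t :=
        (((hg.comp t hu)).const_mul _).sub_const _
      have heq : (fun t => Araw k s lam (momentDeriv k i t) j)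
          = (fun t => lam ^ i * momentDeriv k i (s + lam * t) j
            - (if i = 0 then momentCurve k s j else 0)) := ih j
      have : Araw k s lam (momentDeriv k (i + 1) t) j
          = lam ^ i * (momentDeriv k (i + 1) (s + lam * t) j * lam) := by
        rw [← hL.deriv, heq, hR.deriv]
      rw [this, if_neg (Nat.succ_ne_zero i)]
      ring
  intro i t
  ext j
  have := congrFun (key i j) t
  simp only at this
  rw [show (lam ^ i • momentDeriv k i (s + lam * t)
      - (if i = 0 then momentCurve k s else 0)) j
    = lam ^ i * momentDeriv k i (s + lam * t) j
      - (if i = 0 then momentCurve k s j else 0) from by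
      split_ifs <;> simp [PiLp.sub_apply, PiLp.smul_apply]]
  exact this

lemma Araw_injective (s : ℝ) {lam : ℝ} (hlam : lam ≠ 0) :
    Function.Injective (Araw k s lam) := by
  rw [← LinearMap.ker_eq_bot]
  rw [LinearMap.ker_eq_bot']
  intro x hx
  have hcomp : ∀ (jn : ℕ) (hj : jn < k), x ⟨jn, hj⟩ = 0 := by
    intro jn
    induction jn using Nat.strong_induction_on with
    | _ jn IH =>
      intro hj
      set j : Fin k := ⟨jn, hj⟩
      have h0 : Araw k s lam x j = 0 := by rw [hx]; rfl
      rw [Araw_apply] at h0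
      rw [Finset.sum_eq_single j] at h0
      · have hMjj : Mm k s lam j j = lam ^ (jn + 1) := by
          simp [Mm, j, Nat.choose_self]
        rw [hMjj] at h0
        have := pow_ne_zero (jn + 1) hlam
        exact (mul_eq_zero.mp h0).resolve_left this
      · intro l _ hne
        rcases lt_or_gt_of_ne (fun h : (l : ℕ) = jn => hne (Fin.ext h)) with hlt | hgt
        · rw [IH l hlt l.isLt, mul_zero]
        · rw [show Mm k s lam j l = 0 from if_neg (by simpa [j] using hgt), zero_mul]
      · intro h
        exact absurd (Finset.mem_univ j) h
  ext j
  exact hcomp j.1 j.2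

end Stmt3Aux
noncomputable section
namespace Stmt3Aux2

variable {k : ℕ}

/-- determinant of a continuous linear equiv as linear map -/
def detE (A : Ek k ≃L[ℝ] Ek k) : ℝ := LinearMap.det (A : Ek k →ₗ[ℝ] Ek k)

lemma detE_ne_zero (A : Ek k ≃L[ℝ] Ek k) : detE A ≠ 0 :=
  A.toLinearEquiv.isUnit_det'.ne_zero

lemma cv1 {F : Type*} [NormedAddCommGroup F] [NormedSpace ℝ F]
    (A : Ek k ≃L[ℝ] Ek k) (φ : Ek k → F) :
    ∫ x, φ (A x) = |detE A|⁻¹ • ∫ x, φ x := by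
  have hd : LinearMap.det (A : Ek k →ₗ[ℝ] Ek k) ≠ 0 := detE_ne_zero A
  have h1 : ∫ x, φ (A x) = ∫ y, φ y ∂(volume.map (A.toHomeomorph.toMeasurableEquiv)) :=
    (integral_map_equiv (A.toHomeomorph.toMeasurableEquiv) φ).symm
  have h2 : volume.map (⇑(A.toHomeomorph.toMeasurableEquiv))
      = volume.map (⇑(A : Ek k →ₗ[ℝ] Ek k)) := rfl
  rw [h1, h2, Measure.map_linearMap_addHaar_eq_smul_addHaar volume hd,
    integral_smul_measure, ENNReal.toReal_ofReal (abs_nonneg _), abs_inv]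
  rfl

lemma cv2 {F : Type*} [NormedAddCommGroup F] [NormedSpace ℝ F]
    (A : Ek k ≃L[ℝ] Ek k) (v : Ek k) (φ : Ek k → F) :
    ∫ x, φ (A x + v) = |detE A|⁻¹ • ∫ x, φ x := by
  rw [cv1 A (fun y => φ (y + v)), integral_add_right_eq_self]

/-- the adjoint-inverse equiv -/
def Sadj (A : Ek k ≃L[ℝ] Ek k) : Ek k ≃L[ℝ] Ek k :=
  ContinuousLinearEquiv.equivOfInverse
    (ContinuousLinearMap.adjoint (A.symm : Ek k →L[ℝ] Ek k))
    (ContinuousLinearMap.adjoint (A : Ek k →L[ℝ] Ek k))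
    (by
      intro x
      rw [← ContinuousLinearMap.comp_apply, ← ContinuousLinearMap.adjoint_comp]
      simp [ContinuousLinearMap.ext_iff, ContinuousLinearMap.adjoint_id]
      )
    (by
      intro x
      rw [← ContinuousLinearMap.comp_apply, ← ContinuousLinearMap.adjoint_comp]
      simp [ContinuousLinearMap.ext_iff, ContinuousLinearMap.adjoint_id])

lemma Sadj_apply (A : Ek k ≃L[ℝ] Ek k) (x : Ek k) :
    Sadj A x = ContinuousLinearMap.adjoint (A.symm : Ek k →L[ℝ] Ek k) x := rfl

lemma norm_ftinv_comp (A : Ek k ≃L[ℝ] Ek k) (v : Ek k) (h : Ek k → ℂ) (x : Ek k) :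
    ‖𝓕⁻ (fun ξ => h (A ξ + v)) x‖ = |detE A|⁻¹ * ‖𝓕⁻ h (Sadj A x)‖ := by
  rw [fourierInv_eq]
  have hpt : (fun ξ => (𝐞 (⟪ξ, x⟫) : Circle) • h (A ξ + v))
      = fun ξ => (fun η => (𝐞 (⟪A.symm (η - v), x⟫) : Circle) • h η) (A ξ + v) := by
    funext ξ
    simp
  rw [hpt, cv2 A v (fun η => (𝐞 (⟪A.symm (η - v), x⟫) : Circle) • h η)]
  have hinner : ∀ η : Ek k, ⟪A.symm (η - v), x⟫ = -⟪A.symm v, x⟫ + ⟪η, Sadj A x⟫ := by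
    intro η
    rw [map_sub, inner_sub_left, Sadj_apply, ContinuousLinearMap.adjoint_inner_right]
    simp only [ContinuousLinearEquiv.coe_coe]
    ring
  have hsplit : (fun η => (𝐞 (⟪A.symm (η - v), x⟫) : Circle) • h η)
      = fun η => (𝐞 (-⟪A.symm v, x⟫) : Circle) • ((𝐞 (⟪η, Sadj A x⟫) : Circle) • h η) := by
    funext η
    rw [hinner η, AddChar.map_add_eq_mul, mul_smul]
  rw [hsplit]
  have hconst : ∫ η, (𝐞 (-⟪A.symm v, x⟫) : Circle) • ((𝐞 (⟪η, Sadj A x⟫) : Circle) • h η)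
      = (𝐞 (-⟪A.symm v, x⟫) : Circle) • ∫ η, (𝐞 (⟪η, Sadj A x⟫) : Circle) • h η := by
    simp only [Circle.smul_def]
    exact integral_smul _ _
  rw [hconst, norm_smul, Circle.norm_smul]
  simp only [norm_inv, norm_eq_abs, abs_abs]
  rw [fourierInv_eq]

lemma hasTemperateGrowth_affine {E F : Type*} [NormedAddCommGroup E] [NormedSpace ℝ E]
    [NormedAddCommGroup F] [NormedSpace ℝ F] (A : E →L[ℝ] F) (v : F) :
    Function.HasTemperateGrowth (fun x => A x + v) := by
  obtain ⟨hsmooth, hbound⟩ := A.hasTemperateGrowth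
  refine ⟨hsmooth.add contDiff_const, fun n => ?_⟩
  obtain ⟨m, C, hC⟩ := hbound n
  refine ⟨m, C + ‖v‖, fun x => ?_⟩
  have hone : (1 : ℝ) ≤ (1 + ‖x‖) ^ m :=
    one_le_pow₀ (by linarith [norm_nonneg x])
  have hadd : iteratedFDeriv ℝ n (fun x => A x + v) x
      = iteratedFDeriv ℝ n (⇑A) x + iteratedFDeriv ℝ n (fun _ => v) x :=
    iteratedFDeriv_add_apply (hsmooth.contDiffAt.of_le (by exact_mod_cast le_top)) contDiffAt_const
  rw [hadd]
  rcases Nat.eq_zero_or_pos n with hn | hn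
  · subst hn
    have h2 : ‖iteratedFDeriv ℝ 0 (fun _ : E => v) x‖ = ‖v‖ := by
      rw [norm_iteratedFDeriv_zero]
    calc ‖iteratedFDeriv ℝ 0 (⇑A) x + iteratedFDeriv ℝ 0 (fun _ => v) x‖
        ≤ ‖iteratedFDeriv ℝ 0 (⇑A) x‖ + ‖iteratedFDeriv ℝ 0 (fun _ : E => v) x‖ :=
          norm_add_le _ _
      _ ≤ C * (1 + ‖x‖) ^ m + ‖v‖ := by
          rw [h2]; exact add_le_add_left (hC x) _
      _ ≤ (C + ‖v‖) * (1 + ‖x‖) ^ m := by nlinarith [norm_nonneg v]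
  · have h2 : iteratedFDeriv ℝ n (fun _ : E => v) x = 0 := by
      rw [iteratedFDeriv_const_of_ne hn.ne']
      rfl
    rw [h2, add_zero]
    calc ‖iteratedFDeriv ℝ n (⇑A) x‖ ≤ C * (1 + ‖x‖) ^ m := hC x
      _ ≤ (C + ‖v‖) * (1 + ‖x‖) ^ m := by nlinarith [norm_nonneg v]

lemma affine_upper (A : Ek k ≃L[ℝ] Ek k) (v : Ek k) :
    ∃ (m : ℕ) (C : ℝ), ∀ x, ‖x‖ ≤ C * (1 + ‖(A : Ek k →L[ℝ] Ek k) x + v‖) ^ m := by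
  refine ⟨1, ‖(A.symm : Ek k →L[ℝ] Ek k)‖ * (1 + ‖v‖) + 1, fun x => ?_⟩
  have h1 : ‖x‖ = ‖A.symm (A x + v - v)‖ := by simp
  have h2 : ‖A.symm (A x + v - v)‖ ≤ ‖(A.symm : Ek k →L[ℝ] Ek k)‖ * (‖A x + v‖ + ‖v‖) := by
    refine le_trans ((A.symm : Ek k →L[ℝ] Ek k).le_opNorm _) ?_
    exact mul_le_mul_of_nonneg_left (norm_sub_le _ _) (norm_nonneg _)
  have hN : (0:ℝ) ≤ ‖(A.symm : Ek k →L[ℝ] Ek k)‖ := norm_nonneg _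
  have hx : (0:ℝ) ≤ ‖A x + v‖ := norm_nonneg _
  have hv : (0:ℝ) ≤ ‖v‖ := norm_nonneg _
  calc ‖x‖ ≤ ‖(A.symm : Ek k →L[ℝ] Ek k)‖ * (‖A x + v‖ + ‖v‖) := h1 ▸ h2
    _ ≤ (‖(A.symm : Ek k →L[ℝ] Ek k)‖ * (1 + ‖v‖) + 1) * (1 + ‖A x + v‖) ^ 1 := by
        rw [pow_one]; nlinarith [mul_nonneg hN (mul_nonneg hv hx), mul_nonneg hN hx, mul_nonneg hN hv]

end Stmt3Aux2

namespace Stmt3Aux3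

open Stmt3Aux Stmt3Aux2 SchwartzMap

variable {k : ℕ}

def Taff (A : Ek k ≃L[ℝ] Ek k) (v : Ek k) : Ek k → Ek k := fun ξ => A ξ + v

lemma Taff_temperate (A : Ek k ≃L[ℝ] Ek k) (v : Ek k) :
    Function.HasTemperateGrowth (Taff A v) :=
  hasTemperateGrowth_affine (A : Ek k →L[ℝ] Ek k) v

lemma Taff_upper (A : Ek k ≃L[ℝ] Ek k) (v : Ek k) :
    ∃ (m : ℕ) (C : ℝ), ∀ x, ‖x‖ ≤ C * (1 + ‖Taff A v x‖) ^ m :=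
  affine_upper A v

/-- the conjugated rescaling operator on Schwartz space -/
def Gop (A : Ek k ≃L[ℝ] Ek k) (v : Ek k) : 𝓢(Ek k, ℂ) →L[ℂ] 𝓢(Ek k, ℂ) :=
  ((fourierCLE ℂ 𝓢(Ek k, ℂ)).symm.toContinuousLinearMap).comp
    ((SchwartzMap.compCLM ℂ (Taff_temperate A v) (Taff_upper A v)).comp
      (fourierCLE ℂ 𝓢(Ek k, ℂ)).toContinuousLinearMap)

lemma Gop_fourier (A : Ek k ≃L[ℝ] Ek k) (v : Ek k) (u : 𝓢(Ek k, ℂ)) :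
    𝓕 ⇑(Gop A v u) = (𝓕 ⇑u) ∘ (Taff A v) := by
  have h1 : fourierCLE ℂ _ (Gop A v u)
      = SchwartzMap.compCLM ℂ (Taff_temperate A v) (Taff_upper A v)
          (fourierCLE ℂ _ u) := by
    simp [Gop]
  calc 𝓕 ⇑(Gop A v u) = ⇑(fourierCLE ℂ _ (Gop A v u)) := rfl
    _ = ⇑(fourierCLE ℂ _ u) ∘ (Taff A v) := by rw [h1]; rfl
    _ = (𝓕 ⇑u) ∘ (Taff A v) := by rw [fourierCLE_apply, fourier_coe]

lemma Gop_norm (A : Ek k ≃L[ℝ] Ek k) (v : Ek k) (u : 𝓢(Ek k, ℂ)) (x : Ek k) :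
    ‖Gop A v u x‖ = |detE A|⁻¹ * ‖u (Sadj A x)‖ := by
  have h0 : ⇑(Gop A v u)
      = 𝓕⁻ ⇑(SchwartzMap.compCLM ℂ (Taff_temperate A v) (Taff_upper A v)
          (fourierCLE ℂ _ u)) := by
    rw [show Gop A v u = (fourierCLE ℂ _).symm
      (SchwartzMap.compCLM ℂ (Taff_temperate A v) (Taff_upper A v)
        (fourierCLE ℂ _ u)) from rfl, fourierCLE_symm_apply, fourierInv_coe]
  have h1 : ⇑(SchwartzMap.compCLM ℂ (Taff_temperate A v) (Taff_upper A v)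
      (fourierCLE ℂ _ u)) = fun ξ => (𝓕 ⇑u) (A ξ + v) := by
    rw [SchwartzMap.compCLM_apply, fourierCLE_apply]
    rfl
  have hinv : 𝓕⁻ (𝓕 ⇑u) = ⇑u := by
    rw [← fourier_coe, ← fourierInv_coe, fourierInv_fourier_eq]
  rw [h0, h1, norm_ftinv_comp A v (𝓕 ⇑u) x, hinv]

-- continuing in namespace Stmt3Aux3
open Stmt3Aux Stmt3Aux2
open scoped ENNReal NNReal

variable {k : ℕ}

/-- the rescaling map as a continuous linear equivalence -/
def Aeq (s : ℝ) {lam : ℝ} (hlam : lam ≠ 0) : Ek k ≃L[ℝ] Ek k :=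
  LinearEquiv.toContinuousLinearEquiv
    (LinearEquiv.ofBijective (Araw k s lam)
      ⟨Araw_injective s hlam,
        (LinearMap.injective_iff_surjective).mp (Araw_injective s hlam)⟩)

lemma Aeq_apply (s : ℝ) {lam : ℝ} (hlam : lam ≠ 0) (x : Ek k) :
    Aeq s hlam x = Araw k s lam x := rfl

lemma box_pull (s : ℝ) {lam : ℝ} (hlam : 0 < lam) (a b : ℝ) (ξ : Ek k)
    (hin : Aeq s hlam.ne' ξ + momentCurve k s ∈ UBox k 1 (s + lam * a) (s + lam * b)) :
    ξ ∈ UBox k 1 a b := by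
  obtain ⟨u, hu, hx⟩ := hin
  have hlp : ∀ i : ℕ, (0:ℝ) < lam ^ (i + 1) := fun i => pow_pos hlam _
  refine ⟨fun i => u i / lam ^ ((i : ℕ) + 1), fun i => ?_, ?_⟩
  · have h1 := hu i
    have hlen : (s + lam * b - (s + lam * a)) ^ ((i : ℕ) + 1)
        = lam ^ ((i : ℕ) + 1) * (b - a) ^ ((i : ℕ) + 1) := by
      rw [show s + lam * b - (s + lam * a) = lam * (b - a) by ring, mul_pow]
    rw [hlen] at h1
    rw [abs_div, abs_pow, abs_of_pos hlam, div_le_iff₀ (hlp (i : ℕ))]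
    calc |u i| ≤ 1 * (2 * (lam ^ ((i : ℕ) + 1) * (b - a) ^ ((i : ℕ) + 1))) := h1
      _ = 1 * (2 * (b - a) ^ ((i : ℕ) + 1)) * lam ^ ((i : ℕ) + 1) := by ring
  · apply (Aeq s hlam.ne').injective
    have hcB : (s + lam * a + (s + lam * b)) / 2 = s + lam * ((a + b) / 2) := by ring
    rw [hcB] at hx
    have hAx : Aeq s hlam.ne' ξ
        = momentCurve k (s + lam * ((a + b) / 2)) - momentCurve k s
          + ∑ i : Fin k, u i • momentDeriv k ((i : ℕ) + 1) (s + lam * ((a + b) / 2)) := by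
      have := hx
      rw [eq_sub_of_add_eq this]
      abel
    rw [hAx, map_add, map_sum]
    rw [show Aeq s hlam.ne' (momentCurve k ((a + b) / 2))
        = Araw k s lam (momentCurve k ((a + b) / 2)) from rfl, Araw_momentCurve]
    congr 1
    refine Finset.sum_congr rfl fun i _ => ?_
    rw [_root_.map_smul, show Aeq s hlam.ne' (momentDeriv k ((i : ℕ) + 1) ((a + b) / 2))
        = Araw k s lam (momentDeriv k ((i : ℕ) + 1) ((a + b) / 2)) from rfl,
      Araw_momentDeriv s lam ((i : ℕ) + 1) ((a + b) / 2), if_neg (Nat.succ_ne_zero _), sub_zero,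
      smul_smul, div_mul_cancel₀ _ (pow_ne_zero _ hlam.ne')]

lemma schwartz_coe_sum {ι : Type*} (s : Finset ι) (F : ι → SchwartzMap (Ek k) ℂ) :
    ⇑(∑ j ∈ s, F j) = fun x => ∑ j ∈ s, F j x := by
  induction s using Finset.cons_induction with
  | empty => funext x; simp
  | cons a s ha ih =>
      funext x
      rw [Finset.sum_cons, Finset.sum_cons]
      have : (F a + ∑ j ∈ s, F j) x = F a x + (∑ j ∈ s, F j) x := rfl
      rw [this, ih]


lemma memLp_schwartz (u : SchwartzMap (Ek k) ℂ) {p : ℝ} (hp : 1 ≤ p) :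
    MemLp ⇑u (ENNReal.ofReal p) volume := u.memLp _


lemma LpN_nonneg (p : ℝ) (f : Ek k → ℂ) : 0 ≤ LpN p f :=
  Real.rpow_nonneg (integral_nonneg fun x => Real.rpow_nonneg (norm_nonneg _) p) _

lemma LpN_eq_eLpNorm (u : SchwartzMap (Ek k) ℂ) {p : ℝ} (hp : 1 ≤ p) :
    LpN p ⇑u = (eLpNorm ⇑u (ENNReal.ofReal p) volume).toReal := by
  have hp0 : 0 < p := lt_of_lt_of_le one_pos hp
  have hP0 : ENNReal.ofReal p ≠ 0 := by simp [ENNReal.ofReal_eq_zero, not_le, hp0]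
  rw [MemLp.eLpNorm_eq_integral_rpow_norm hP0 ENNReal.ofReal_ne_top (memLp_schwartz u hp),
    ENNReal.toReal_ofReal]
  · rw [ENNReal.toReal_ofReal hp0.le]
    rfl
  · exact Real.rpow_nonneg (integral_nonneg fun x => Real.rpow_nonneg (norm_nonneg _) _) _

lemma trivial_dec (hk : 0 < k) (m : ℕ) (f : ℕ → SchwartzMap (Ek k) ℂ) :
    LpN (pk k) (fun x => ∑ j ∈ Finset.range m, f j x) ≤
      Real.sqrt m * (∑ j ∈ Finset.range m, LpN (pk k) (f j) ^ 2) ^ ((1:ℝ)/2) := by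
  have hp1 : (1:ℝ) ≤ pk k := by
    unfold pk
    have : (1:ℝ) ≤ (k:ℝ) := by exact_mod_cast hk
    nlinarith
  set P := ENNReal.ofReal (pk k) with hP
  have hP1 : (1 : ℝ≥0∞) ≤ P := by
    rw [hP, ← ENNReal.ofReal_one]
    exact ENNReal.ofReal_le_ofReal hp1
  have hcoe : (fun x => ∑ j ∈ Finset.range m, f j x) = ⇑(∑ j ∈ Finset.range m, f j) :=
    (schwartz_coe_sum _ _).symm
  have hne : ∀ j ∈ Finset.range m, eLpNorm ⇑(f j) P volume ≠ ⊤ :=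
    fun j _ => (memLp_schwartz (f j) hp1).2.ne
  have hstep1 : LpN (pk k) (fun x => ∑ j ∈ Finset.range m, f j x)
      ≤ ∑ j ∈ Finset.range m, LpN (pk k) ⇑(f j) := by
    rw [hcoe, LpN_eq_eLpNorm _ hp1]
    have hsum_coe2 : ⇑(∑ j ∈ Finset.range m, f j) = ∑ j ∈ Finset.range m, ⇑(f j) := by
      rw [schwartz_coe_sum]
      funext x
      simp [Finset.sum_apply]
    have h1 : eLpNorm ⇑(∑ j ∈ Finset.range m, f j) P volume
        ≤ ∑ j ∈ Finset.range m, eLpNorm ⇑(f j) P volume := by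
      rw [hsum_coe2]
      exact eLpNorm_sum_le (fun j _ => (f j).continuous.aestronglyMeasurable) hP1
    refine le_trans (ENNReal.toReal_mono ?_ h1) ?_
    · exact (ENNReal.sum_lt_top.mpr fun j hj => lt_of_le_of_ne le_top (hne j hj)).ne
    · rw [ENNReal.toReal_sum hne]
      exact le_of_eq (Finset.sum_congr rfl fun j _ => (LpN_eq_eLpNorm (f j) hp1).symm)
  refine le_trans hstep1 ?_
  -- Cauchy-Schwarz
  set a : ℕ → ℝ := fun j => LpN (pk k) ⇑(f j) with ha
  have ha0 : ∀ j, 0 ≤ a j := fun j => LpN_nonneg _ _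
  have hsq : (∑ j ∈ Finset.range m, a j) ^ 2 ≤ (m:ℝ) * ∑ j ∈ Finset.range m, a j ^ 2 := by
    have := sq_sum_le_card_mul_sum_sq (s := Finset.range m) (f := a)
    simpa using this
  have hsum0 : 0 ≤ ∑ j ∈ Finset.range m, a j := Finset.sum_nonneg fun j _ => ha0 j
  have hsum2 : 0 ≤ ∑ j ∈ Finset.range m, a j ^ 2 :=
    Finset.sum_nonneg fun j _ => sq_nonneg _
  calc ∑ j ∈ Finset.range m, a j
      = Real.sqrt ((∑ j ∈ Finset.range m, a j) ^ 2) := (Real.sqrt_sq hsum0).symm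
    _ ≤ Real.sqrt ((m:ℝ) * ∑ j ∈ Finset.range m, a j ^ 2) := Real.sqrt_le_sqrt hsq
    _ = Real.sqrt m * Real.sqrt (∑ j ∈ Finset.range m, a j ^ 2) :=
        Real.sqrt_mul (Nat.cast_nonneg m) _
    _ = Real.sqrt m * (∑ j ∈ Finset.range m, a j ^ 2) ^ ((1:ℝ)/2) := by
        rw [Real.sqrt_eq_rpow, Real.sqrt_eq_rpow]

lemma glue (L R : ℝ) (hR : 0 ≤ R) (S : Set ℝ) (hne : S.Nonempty)
    (hS0 : ∀ C ∈ S, 0 ≤ C) (h : ∀ C ∈ S, L ≤ C * R) : L ≤ sInf S * R := by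
  rcases eq_or_lt_of_le hR with hR0 | hRpos
  · obtain ⟨C₀, hC₀⟩ := hne
    have := h C₀ hC₀
    rw [← hR0, mul_zero] at this ⊢
    exact this
  · have h2 : L / R ≤ sInf S :=
      le_csInf hne fun C hC => (div_le_iff₀ hRpos).mpr (h C hC)
    calc L = L / R * R := by field_simp
      _ ≤ sInf S * R := mul_le_mul_of_nonneg_right h2 hR


lemma Taff_apply (A : Ek k ≃L[ℝ] Ek k) (v : Ek k) (ξ : Ek k) :
    Taff A v ξ = A ξ + v := rfl

lemma LpN_comp_scale (p : ℝ) (hp : 0 < p) (c : ℝ) (hc : 0 ≤ c) (B : Ek k ≃L[ℝ] Ek k)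
    (g u : Ek k → ℂ) (hpt : ∀ x, ‖g x‖ = c * ‖u (B x)‖) :
    LpN p g = c * (|detE B|⁻¹) ^ p⁻¹ * LpN p u := by
  have h1 : ∀ x, ‖g x‖ ^ p = c ^ p * ‖u (B x)‖ ^ p := fun x => by
    rw [hpt x, Real.mul_rpow hc (norm_nonneg _)]
  have hI : (0:ℝ) ≤ ∫ x, ‖u x‖ ^ p :=
    integral_nonneg fun x => Real.rpow_nonneg (norm_nonneg _) p
  have hD : (0:ℝ) ≤ |detE B|⁻¹ := by positivity
  unfold LpN
  rw [show (fun x => ‖g x‖ ^ p) = fun x => c ^ p * ‖u (B x)‖ ^ p from funext h1]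
  rw [MeasureTheory.integral_const_mul, cv1 B (fun y => ‖u y‖ ^ p), smul_eq_mul,
    Real.mul_rpow (Real.rpow_nonneg hc p) (mul_nonneg hD hI),
    Real.mul_rpow hD hI, ← Real.rpow_mul hc,
    mul_inv_cancel₀ hp.ne', Real.rpow_one, mul_assoc]

end Stmt3Aux3

end

noncomputable section

theorem stmt3 (k n i m m' : ℕ) (hm' : 0 < m') (hi : i < 2 ^ n)
    (hm : m = 2 ^ n * m') (hδ : 2 ^ n < m)
    (f : ℕ → SchwartzMap (Ek k) ℂ)
    (hf : ∀ j < m', Function.support (𝓕 ⇑(f j)) ⊆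
      UBox k 1 ((i : ℝ)/2^n + (j:ℝ)/m) ((i:ℝ)/2^n + ((j:ℝ)+1)/m)) :
    LpN (pk k) (fun x => ∑ j ∈ Finset.range m', f j x) ≤
      DecConst k m' * (∑ j ∈ Finset.range m', LpN (pk k) (f j) ^ 2) ^ ((1:ℝ)/2) := by
  classical
  set S : Set ℝ := {C : ℝ | 0 ≤ C ∧ ∀ mm : ℕ, 0 < mm → mm ≤ m' → DecIneq k mm C} with hSdef
  have hDC : DecConst k m' = sInf S := rfl
  have hT0 : (0:ℝ) ≤ ∑ j ∈ Finset.range m', LpN (pk k) (f j) ^ 2 :=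
    Finset.sum_nonneg fun j _ => sq_nonneg _
  have hR0 : (0:ℝ) ≤ (∑ j ∈ Finset.range m', LpN (pk k) (f j) ^ 2) ^ ((1:ℝ)/2) :=
    Real.rpow_nonneg hT0 _
  rcases Nat.eq_zero_or_pos k with hk0 | hk
  · -- k = 0 : all LpN equal 1
    subst hk0
    have hL : ∀ h : Ek 0 → ℂ, LpN (pk 0) h = 1 := by
      intro h
      unfold LpN pk
      norm_num
    have hsupp0 : ∀ (u : SchwartzMap (Ek 0) ℂ) (a b : ℝ),
        Function.support (𝓕 ⇑u) ⊆ UBox 0 1 a b := by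
      intro u a b x _
      exact ⟨Fin.elim0, fun i => i.elim0, Subsingleton.elim _ _⟩
    have hmem : (1:ℝ) ∈ S := by
      refine ⟨zero_le_one, fun mm hmm _ => ?_⟩
      intro g _
      rw [hL]
      have hsum : (∑ j ∈ Finset.range mm, LpN (pk 0) (g j) ^ 2) = (mm : ℝ) := by
        rw [Finset.sum_congr rfl (fun j _ => by rw [hL ⇑(g j)]; norm_num : ∀ j ∈ Finset.range mm,
          LpN (pk 0) ⇑(g j) ^ 2 = 1), Finset.sum_const, Finset.card_range, nsmul_eq_mul, mul_one]
      rw [hsum, one_mul]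
      exact Real.one_le_rpow (by exact_mod_cast hmm) (by norm_num)
    have h1S : ∀ C ∈ S, (1:ℝ) ≤ C := by
      intro C hC
      have := hC.2 1 one_pos hm' (fun _ => f 0) (fun j _ => hsupp0 _ _ _)
      rw [hL] at this
      have hs1 : (∑ j ∈ Finset.range 1, LpN (pk 0) ⇑((fun _ => f 0) j) ^ 2) = 1 := by
        simp [hL ⇑(f 0)]
      rw [hs1, Real.one_rpow, mul_one] at this
      exact this
    rw [hDC, hL]
    have hinf1 : (1:ℝ) ≤ sInf S := le_csInf ⟨1, hmem⟩ h1S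
    have hRsum : (∑ j ∈ Finset.range m', LpN (pk 0) (f j) ^ 2) = (m' : ℝ) := by
      rw [Finset.sum_congr rfl (fun j _ => by rw [hL ⇑(f j)]; norm_num : ∀ j ∈ Finset.range m',
        LpN (pk 0) ⇑(f j) ^ 2 = 1), Finset.sum_const, Finset.card_range, nsmul_eq_mul, mul_one]
    rw [hRsum]
    have hRge : (1:ℝ) ≤ ((m' : ℝ)) ^ ((1:ℝ)/2) :=
      Real.one_le_rpow (by exact_mod_cast hm') (by norm_num)
    nlinarith
  · -- main case k ≥ 1
    have hkR : (1:ℝ) ≤ (k:ℝ) := by exact_mod_cast hk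
    have hppos : 0 < pk k := by unfold pk; nlinarith
    have hp1 : (1:ℝ) ≤ pk k := by unfold pk; nlinarith
    have hSne : Real.sqrt m' ∈ S := by
      refine ⟨Real.sqrt_nonneg _, fun mm hmm hmm' => ?_⟩
      intro g _
      refine le_trans (Stmt3Aux3.trivial_dec hk mm g) ?_
      refine mul_le_mul_of_nonneg_right (Real.sqrt_le_sqrt (by exact_mod_cast hmm'))
        (Real.rpow_nonneg (Finset.sum_nonneg fun j _ => sq_nonneg _) _)
    have key : ∀ C ∈ S, LpN (pk k) (fun x => ∑ j ∈ Finset.range m', f j x) ≤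
        C * (∑ j ∈ Finset.range m', LpN (pk k) (f j) ^ 2) ^ ((1:ℝ)/2) := by
      rintro C ⟨hC0, hC⟩
      set lam : ℝ := ((2:ℝ)^n)⁻¹ with hlamdef
      have hlam : 0 < lam := by positivity
      set s : ℝ := (i:ℝ)/2^n with hsdef
      set A := Stmt3Aux3.Aeq (k := k) s hlam.ne' with hAdef
      set v := momentCurve k s with hvdef
      set g : ℕ → SchwartzMap (Ek k) ℂ := fun j => Stmt3Aux3.Gop A v (f j) with hgdef
      have h2n : ((2:ℝ)^n) ≠ 0 := by positivity
      have hm'0 : ((m' : ℕ):ℝ) ≠ 0 := Nat.cast_ne_zero.mpr hm'.ne'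
      have hm2 : (m:ℝ) = 2^n * m' := by rw [hm]; push_cast; ring
      have hgsupp : ∀ j < m', Function.support (𝓕 ⇑(g j)) ⊆
          UBox k 1 ((j:ℝ)/m') (((j:ℝ)+1)/m') := by
        intro j hj
        rw [hgdef]
        simp only
        rw [Stmt3Aux3.Gop_fourier, Function.support_comp_eq_preimage]
        intro ξ hξ
        have hmem := hf j hj hξ
        rw [Stmt3Aux3.Taff_apply] at hmem
        have hend1 : (i : ℝ)/2^n + (j:ℝ)/m = s + lam * ((j:ℝ)/m') := by
          rw [hsdef, hlamdef, hm2]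
          field_simp
        have hend2 : (i : ℝ)/2^n + ((j:ℝ)+1)/m = s + lam * (((j:ℝ)+1)/m') := by
          rw [hsdef, hlamdef, hm2]
          field_simp
        rw [hend1, hend2] at hmem
        exact Stmt3Aux3.box_pull s hlam _ _ ξ hmem
      have hineq := hC m' hm' le_rfl g hgsupp
      set κ : ℝ := |Stmt3Aux2.detE A|⁻¹ * (|Stmt3Aux2.detE (Stmt3Aux2.Sadj A)|⁻¹) ^ (pk k)⁻¹
        with hκdef
      have hd1 : 0 < |Stmt3Aux2.detE A| := abs_pos.mpr (Stmt3Aux2.detE_ne_zero A)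
      have hd2 : 0 < |Stmt3Aux2.detE (Stmt3Aux2.Sadj A)| :=
        abs_pos.mpr (Stmt3Aux2.detE_ne_zero _)
      have hκpos : 0 < κ := by
        rw [hκdef]
        have := Real.rpow_pos_of_pos (inv_pos.mpr hd2) (pk k)⁻¹
        positivity
      have hgeq : ∀ u : SchwartzMap (Ek k) ℂ,
          LpN (pk k) ⇑(Stmt3Aux3.Gop A v u) = κ * LpN (pk k) ⇑u := by
        intro u
        rw [hκdef]
        exact Stmt3Aux3.LpN_comp_scale (pk k) hppos _ (by positivity) (Stmt3Aux2.Sadj A)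
          _ _ (fun x => Stmt3Aux3.Gop_norm A v u x)
      have hsum : LpN (pk k) (fun x => ∑ j ∈ Finset.range m', g j x)
          = κ * LpN (pk k) (fun x => ∑ j ∈ Finset.range m', f j x) := by
        have h1 : (fun x => ∑ j ∈ Finset.range m', g j x)
            = ⇑(Stmt3Aux3.Gop A v (∑ j ∈ Finset.range m', f j)) := by
          rw [map_sum, Stmt3Aux3.schwartz_coe_sum, hgdef]
        rw [h1, hgeq (∑ j ∈ Finset.range m', f j), Stmt3Aux3.schwartz_coe_sum]
      have hrhs : (∑ j ∈ Finset.range m', LpN (pk k) ⇑(g j) ^ 2)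
          = κ^2 * ∑ j ∈ Finset.range m', LpN (pk k) ⇑(f j) ^ 2 := by
        rw [Finset.mul_sum]
        refine Finset.sum_congr rfl fun j _ => ?_
        rw [hgdef]
        simp only
        rw [hgeq (f j), mul_pow]
      have hhalf : (κ^2 * ∑ j ∈ Finset.range m', LpN (pk k) ⇑(f j) ^ 2) ^ ((1:ℝ)/2)
          = κ * (∑ j ∈ Finset.range m', LpN (pk k) ⇑(f j) ^ 2) ^ ((1:ℝ)/2) := by
        rw [Real.mul_rpow (sq_nonneg κ) hT0, ← Real.rpow_natCast κ 2,
          ← Real.rpow_mul hκpos.le]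
        norm_num
      rw [hsum, hrhs, hhalf] at hineq
      have hfin : κ * LpN (pk k) (fun x => ∑ j ∈ Finset.range m', f j x)
          ≤ κ * (C * (∑ j ∈ Finset.range m', LpN (pk k) ⇑(f j) ^ 2) ^ ((1:ℝ)/2)) := by
        calc κ * LpN (pk k) (fun x => ∑ j ∈ Finset.range m', f j x)
            ≤ C * (κ * (∑ j ∈ Finset.range m', LpN (pk k) ⇑(f j) ^ 2) ^ ((1:ℝ)/2)) := hineq
          _ = κ * (C * (∑ j ∈ Finset.range m', LpN (pk k) ⇑(f j) ^ 2) ^ ((1:ℝ)/2)) := by ring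
      exact le_of_mul_le_mul_left hfin hκpos
    rw [hDC]
    exact Stmt3Aux3.glue _ _ hR0 S ⟨_, hSne⟩ (fun C hC => hC.1) key

end
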